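/- Let f ∈ ℝ[X₁,…,Xₙ] with deg f ≤ 2d, and suppose f attains its global infimum on ℝⁿ. Let y be an optimal solution of the NDS relaxation (P_{2d,NDS}) (feasible with objective value equal to P*_{2d,NDS}), and suppose there exist N ∈ ℕ, points a₁,…,a_N in the real gradient variety V_f and λ₁,…,λ_N > 0 such that M_d(y) = Σᵢ λᵢ V_d(aᵢ)V_d(aᵢ)ᵀ. Then P* = P*_{2d,NDS} and each aᵢ is a global minimizer of f (f(aᵢ) = P* for all i). -/

import Mathlib

open MvPolynomial Matrix

noncomputable section

/-- `Idx n d` is the set `N_d` of exponent multi-indices `α ∈ ℕⁿ` with `|α| ≤ d`. -/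
abbrev Idx (n d : ℕ) := {α : Fin n →₀ ℕ // (∑ i, α i) ≤ d}

instance idxFintype (n d : ℕ) : Fintype (Idx n d) :=
  Fintype.ofInjective
    (fun a => (fun i => (⟨a.1 i, Nat.lt_succ_of_le
        (le_trans (Finset.single_le_sum (fun _ _ => Nat.zero_le _) (Finset.mem_univ i)) a.2)⟩ :
        Fin (d + 1))))
    (fun a b h => by
      apply Subtype.ext
      ext i
      exact congrArg Fin.val (congrFun h i))

/-- The moment matrix `M_d(y)`, indexed by `N_d × N_d`, with entries `y_{α+β}`. -/
def momMat (n d : ℕ) (y : (Fin n →₀ ℕ) → ℝ) : Matrix (Idx n d) (Idx n d) ℝ :=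
  Matrix.of fun a b => y (a.1 + b.1)

/-- The vector `V_d(x) = (x^α)_{α ∈ N_d}` of monomials of degree at most `d` at `x`. -/
def monoVec (n d : ℕ) (x : Fin n → ℝ) : Idx n d → ℝ :=
  fun a => ∏ i, x i ^ (a.1 i)

/-- The Riesz functional `L_y(h) = Σ_α h_α y_α`. -/
def riesz {n : ℕ} (y : (Fin n →₀ ℕ) → ℝ) (h : MvPolynomial (Fin n) ℝ) : ℝ :=
  ∑ α ∈ h.support, h.coeff α * y α

/-- Feasibility for the moment relaxation `(P_k)` : `y_0 = 1` and `M_{⌊k/2⌋}(y) ⪰ 0`. -/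
def momFeasible (n k : ℕ) (y : (Fin n →₀ ℕ) → ℝ) : Prop :=
  y 0 = 1 ∧ (momMat n (k / 2) y).PosSemidef

/-- `P*_k`, the optimal value of the moment relaxation `(P_k)`. -/
def momOpt (n k : ℕ) (f : MvPolynomial (Fin n) ℝ) : EReal :=
  sInf {v : EReal | ∃ y, momFeasible n k y ∧ v = (riesz y f : ℝ)}

/-- `P*`, the global infimum of `f` on `ℝⁿ`. -/
def globalOpt (n : ℕ) (f : MvPolynomial (Fin n) ℝ) : EReal :=
  sInf {v : EReal | ∃ x : Fin n → ℝ, v = (eval x f : ℝ)}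

/-- Feasibility for the NDS (gradient) relaxation `(P_{k,NDS})` : `y_0 = 1`,
`M_{⌊k/2⌋}(y) ⪰ 0`, and `L_y(g·∂f/∂Xᵢ) = 0` for all admissible `g` and all `i`. -/
def ndsFeasible (n k : ℕ) (f : MvPolynomial (Fin n) ℝ) (y : (Fin n →₀ ℕ) → ℝ) : Prop :=
  y 0 = 1 ∧ (momMat n (k / 2) y).PosSemidef ∧
    ∀ i : Fin n, ∀ g : MvPolynomial (Fin n) ℝ,
      (g * pderiv i f).totalDegree ≤ k → riesz y (g * pderiv i f) = 0

/-- `P*_{k,NDS}`, the optimal value of the NDS relaxation. -/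
def ndsOpt (n k : ℕ) (f : MvPolynomial (Fin n) ℝ) : EReal :=
  sInf {v : EReal | ∃ y, ndsFeasible n k f y ∧ v = (riesz y f : ℝ)}

section Aux

variable {n : ℕ}

/-- split lemma: any `k ≤ Σα` is achieved by some `β ≤ α`. -/
lemma exists_le_sum_eq (α : Fin n →₀ ℕ) (k : ℕ) (hk : k ≤ ∑ i, α i) :
    ∃ β : Fin n →₀ ℕ, (∀ i, β i ≤ α i) ∧ ∑ i, β i = k := by
  induction k with
  | zero => exact ⟨0, fun i => Nat.zero_le _, by simp⟩
  | succ k ih =>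
    obtain ⟨β, hβ, hs⟩ := ih (Nat.le_of_succ_le hk)
    have hlt : ∃ i, β i < α i := by
      by_contra h
      push_neg at h
      have : ∑ i, α i ≤ ∑ i, β i := Finset.sum_le_sum fun i _ => h i
      omega
    obtain ⟨i, hi⟩ := hlt
    refine ⟨β + Finsupp.single i 1, fun j => ?_, ?_⟩
    · rcases eq_or_ne j i with rfl | hne
      · simpa [Finsupp.single_apply] using hi
      · simp [Finsupp.single_apply, (Ne.symm hne)]
        exact hβ j
    · simp only [Finsupp.add_apply, Finset.sum_add_distrib, hs]
      simp [Finsupp.single_apply]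

/-- point evaluation pseudo-moment sequence -/
def deltaY (x : Fin n → ℝ) : (Fin n →₀ ℕ) → ℝ := fun α => ∏ i, x i ^ α i

lemma riesz_deltaY (x : Fin n → ℝ) (h : MvPolynomial (Fin n) ℝ) :
    riesz (deltaY x) h = eval x h := by
  rw [eval_eq']; rfl

lemma momMat_deltaY_psd (d : ℕ) (x : Fin n → ℝ) : (momMat n d (deltaY x)).PosSemidef := by
  have hEq : momMat n d (deltaY x) =
      Matrix.vecMulVec (monoVec n d x) (monoVec n d x) := by
    ext a b
    simp only [momMat, Matrix.of_apply, deltaY, Matrix.vecMulVec_apply, monoVec,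
      Finsupp.add_apply, pow_add, Finset.prod_mul_distrib]
  rw [hEq]
  set u := monoVec n d x with hu
  refine Matrix.PosSemidef.of_dotProduct_mulVec_nonneg ?_ ?_
  · ext a b
    simp [Matrix.conjTranspose_apply, Matrix.vecMulVec_apply, mul_comm]
  · intro v
    have key : dotProduct (star v) (Matrix.vecMulVec u u *ᵥ v)
        = (∑ b, u b * v b) * (∑ b, u b * v b) := by
      simp only [star_trivial, dotProduct, Matrix.mulVec, Matrix.vecMulVec_apply,
        Finset.sum_mul, Finset.mul_sum]
      rw [Finset.sum_comm]
      refine Finset.sum_congr rfl fun i _ => Finset.sum_congr rfl fun b _ => by ring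
    rw [key]
    exact mul_self_nonneg _

lemma delta_ndsFeasible (d : ℕ) (f : MvPolynomial (Fin n) ℝ) (x : Fin n → ℝ)
    (hx : ∀ j, eval x (pderiv j f) = 0) : ndsFeasible n (2 * d) f (deltaY x) := by
  refine ⟨by simp [deltaY], ?_, ?_⟩
  · have : 2 * d / 2 = d := by omega
    rw [this]
    exact momMat_deltaY_psd d x
  · intro i g _
    rw [riesz_deltaY, eval_mul, hx i, mul_zero]

lemma hasDerivAt_eval_update (f : MvPolynomial (Fin n) ℝ) (x : Fin n → ℝ) (j : Fin n) :
    HasDerivAt (fun t => eval (Function.update x j t) f) (eval x (pderiv j f)) (x j) := by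
  induction f using MvPolynomial.induction_on with
  | C a => simpa using hasDerivAt_const (x j) a
  | add p q hp hq => simp only [map_add]; exact hp.add hq
  | mul_X p i hp =>
    rcases eq_or_ne i j with rfl | hne
    · have h := hp.mul (hasDerivAt_id (x i))
      have heq : (fun t => eval (Function.update x i t) (p * X i)) =
          fun t => eval (Function.update x i t) p * t := by
        funext t; simp [Function.update_self]
      rw [heq]
      have hval : eval (Function.update x i (x i)) p = eval x p := by
        rw [Function.update_eq_self]
      have hder : eval x (pderiv i (p * X i)) =
          eval x (pderiv i p) * x i + eval (Function.update x i (x i)) p * 1 := by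
        rw [hval]
        simp [pderiv_mul, pderiv_X, Pi.single_eq_same]
        ring
      rw [hder]
      exact h
    · have h := hp.mul_const (x i)
      have heq : (fun t => eval (Function.update x j t) (p * X i)) =
          fun t => eval (Function.update x j t) p * x i := by
        funext t; simp [Function.update_of_ne hne]
      rw [heq]
      have hder : eval x (pderiv j (p * X i)) = eval x (pderiv j p) * x i := by
        simp [pderiv_mul, pderiv_X, Pi.single_eq_of_ne hne]
        ring
      rw [hder]
      exact h

lemma pderiv_eval_eq_zero_of_min (f : MvPolynomial (Fin n) ℝ) (x : Fin n → ℝ)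
    (hx : ∀ z, eval x f ≤ eval z f) (j : Fin n) : eval x (pderiv j f) = 0 := by
  have hd := hasDerivAt_eval_update f x j
  have hmin : IsLocalMin (fun t => eval (Function.update x j t) f) (x j) := by
    apply Filter.Eventually.of_forall
    intro t
    simp only [Function.update_eq_self]
    exact hx _
  exact hmin.hasDerivAt_eq_zero hd

end Aux

/-- suppose `f` attains its global infimum, `y` is an optimal solution of the
NDS relaxation `(P_{2d,NDS})`, and `M_d(y) = Σᵢ λᵢ V_d(aᵢ)V_d(aᵢ)ᵀ` with `λᵢ > 0` and all
`aᵢ` in the real gradient variety `V_f`.  Then `P* = P*_{2d,NDS}` and every `aᵢ` is a global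
minimizer of `f`. -/
theorem nds_optimality_from_decomposition (n d : ℕ) (f : MvPolynomial (Fin n) ℝ)
    (hf : f.totalDegree ≤ 2 * d)
    (hattain : ∃ xs : Fin n → ℝ, ((eval xs f : ℝ) : EReal) = globalOpt n f)
    (y : (Fin n →₀ ℕ) → ℝ) (hfeas : ndsFeasible n (2 * d) f y)
    (hopt : ((riesz y f : ℝ) : EReal) = ndsOpt n (2 * d) f)
    (N : ℕ) (a : Fin N → (Fin n → ℝ))
    (ha : ∀ i, ∀ j : Fin n, eval (a i) (pderiv j f) = 0)
    (lam : Fin N → ℝ) (hlam : ∀ i, 0 < lam i)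
    (hM : momMat n d y =
      ∑ i, lam i • Matrix.vecMulVec (monoVec n d (a i)) (monoVec n d (a i))) :
    globalOpt n f = ndsOpt n (2 * d) f ∧
    ∀ i, ((eval (a i) f : ℝ) : EReal) = globalOpt n f := by
  classical
  obtain ⟨hy0, hypsd, hynds⟩ := hfeas
  -- delta measures at critical points are feasible
  have hdelta : ∀ x : Fin n → ℝ, (∀ j, eval x (pderiv j f) = 0) →
      ((eval x f : ℝ) : EReal) ∈
        {v : EReal | ∃ y, ndsFeasible n (2 * d) f y ∧ v = (riesz y f : ℝ)} := by
    intro x hx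
    exact ⟨deltaY x, delta_ndsFeasible d f x hx, by rw [riesz_deltaY]⟩
  -- the moment values of y up to degree 2d
  have hyα : ∀ α : Fin n →₀ ℕ, (∑ i, α i) ≤ 2 * d →
      y α = ∑ i, lam i * ∏ j, a i j ^ α j := by
    intro α hα
    obtain ⟨β, hβle, hβs⟩ := exists_le_sum_eq α (min (∑ i, α i) d) (min_le_left _ _)
    set γ := α - β with hγdef
    have hβγ : β + γ = α := by
      ext i
      simp only [Finsupp.add_apply, hγdef, Finsupp.tsub_apply]
      have := hβle i
      omega
    have hsplit : (∑ i, β i) + (∑ i, γ i) = ∑ i, α i := by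
      rw [← Finset.sum_add_distrib]
      exact Finset.sum_congr rfl fun i _ => by
        simpa [Finsupp.add_apply] using DFunLike.congr_fun hβγ i
    have hβd : (∑ i, β i) ≤ d := by rw [hβs]; exact min_le_right _ _
    have hγd : (∑ i, γ i) ≤ d := by omega
    have hmm := congrFun (congrFun hM ⟨β, hβd⟩) ⟨γ, hγd⟩
    simp only [momMat, Matrix.of_apply, Matrix.sum_apply, Matrix.smul_apply,
      Matrix.vecMulVec_apply, monoVec, smul_eq_mul] at hmm
    rw [← hβγ, hmm]
    refine Finset.sum_congr rfl fun i _ => ?_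
    rw [← Finset.prod_mul_distrib]
    congr 1
    refine Finset.prod_congr rfl fun j _ => ?_
    rw [← pow_add, Finsupp.add_apply]
  have hsum1 : ∑ i, lam i = 1 := by
    have h := hyα 0 (by simp)
    symm
    simpa [hy0] using h
  have hrf : riesz y f = ∑ i, lam i * eval (a i) f := by
    unfold riesz
    have hterm : ∀ α ∈ f.support, f.coeff α * y α
        = ∑ i, lam i * (f.coeff α * ∏ j, a i j ^ α j) := by
      intro α hα
      have hdeg : (∑ i, α i) ≤ 2 * d := by
        have h1 : (α.sum fun _ e => e) ≤ f.totalDegree := le_totalDegree hα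
        have h2 : (α.sum fun _ e => e) = ∑ i, α i :=
          Finsupp.sum_fintype _ _ (fun _ => rfl)
        omega
      rw [hyα α hdeg, Finset.mul_sum]
      exact Finset.sum_congr rfl fun i _ => by ring
    rw [Finset.sum_congr rfl hterm, Finset.sum_comm]
    refine Finset.sum_congr rfl fun i _ => ?_
    rw [← Finset.mul_sum, eval_eq']
  rcases Nat.eq_zero_or_pos N with rfl | hN
  · simp at hsum1
  have hQle : ∀ i, riesz y f ≤ eval (a i) f := by
    intro i
    have hle : ndsOpt n (2 * d) f ≤ ((eval (a i) f : ℝ) : EReal) :=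
      sInf_le (hdelta (a i) (ha i))
    rw [← hopt] at hle
    exact EReal.coe_le_coe_iff.mp hle
  have heach : ∀ i, eval (a i) f = riesz y f := by
    have h0 : ∑ i, lam i * (eval (a i) f - riesz y f) = 0 := by
      have hrw : ∑ i, lam i * (eval (a i) f - riesz y f)
          = (∑ i, lam i * eval (a i) f) - (∑ i, lam i) * riesz y f := by
        rw [Finset.sum_mul, ← Finset.sum_sub_distrib]
        exact Finset.sum_congr rfl fun i _ => by ring
      rw [hrw, ← hrf, hsum1, one_mul, sub_self]
    intro i
    have hterm : lam i * (eval (a i) f - riesz y f) = 0 :=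
      (Finset.sum_eq_zero_iff_of_nonneg
        (fun j _ => mul_nonneg (hlam j).le (sub_nonneg.mpr (hQle j)))).mp
        h0 i (Finset.mem_univ i)
    rcases mul_eq_zero.mp hterm with h | h
    · exact absurd h (hlam i).ne'
    · linarith [sub_eq_zero.mp h]
  obtain ⟨xs, hxs⟩ := hattain
  have hxsmin : ∀ z, eval xs f ≤ eval z f := by
    intro z
    have hz : globalOpt n f ≤ ((eval z f : ℝ) : EReal) := sInf_le ⟨z, rfl⟩
    rw [← hxs] at hz
    exact EReal.coe_le_coe_iff.mp hz
  have hQP : ndsOpt n (2 * d) f ≤ globalOpt n f := by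
    rw [← hxs]
    exact sInf_le (hdelta xs (pderiv_eval_eq_zero_of_min f xs hxsmin))
  have hPQ : globalOpt n f ≤ ndsOpt n (2 * d) f := by
    calc globalOpt n f ≤ ((eval (a ⟨0, hN⟩) f : ℝ) : EReal) := sInf_le ⟨a ⟨0, hN⟩, rfl⟩
      _ = ((riesz y f : ℝ) : EReal) := by rw [heach]
      _ = ndsOpt n (2 * d) f := hopt
  refine ⟨le_antisymm hPQ hQP, fun i => ?_⟩
  rw [heach i, hopt]
  exact (le_antisymm hPQ hQP).symm
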